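/- If m = p₁^{α₁}⋯p_ℓ^{α_ℓ} is the prime factorization of m, then the number of sublattices of index m in ℤⁿ equals ∏_{i=1}^{ℓ} ∏_{j=1}^{α_i} (p_i^{j+n-1} − 1)/(p_i^j − 1). -/

import Mathlib

open AddSubgroup

variable {A : Type} [AddCommGroup A]

/-- The subgroup of `A × ℤ` built from `H' ≤ A`, a step `d`, and a coset `c ∈ A ⧸ H'`. -/
def mkH (H' : AddSubgroup A) (d : ℕ) (c : A ⧸ H') : AddSubgroup (A × ℤ) where
  carrier := {x | ∃ k : ℤ, x.2 = k * d ∧ (x.1 : A ⧸ H') = k • c}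
  zero_mem' := ⟨0, by simp⟩
  add_mem' := by
    rintro ⟨a, t⟩ ⟨b, s⟩ ⟨k, hk1, hk2⟩ ⟨l, hl1, hl2⟩
    simp only at hk1 hk2 hl1 hl2
    refine ⟨k + l, ?_, ?_⟩
    · simp [hk1, hl1, add_mul]
    · show ((a + b : A) : A ⧸ H') = (k + l) • c
      rw [QuotientAddGroup.mk_add, hk2, hl2, add_zsmul]
  neg_mem' := by
    rintro ⟨a, t⟩ ⟨k, hk1, hk2⟩
    simp only at hk1 hk2
    refine ⟨-k, ?_, ?_⟩
    · simp [hk1]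
    · show ((-a : A) : A ⧸ H') = (-k) • c
      rw [QuotientAddGroup.mk_neg, hk2, neg_zsmul]

lemma mem_mkH {H' : AddSubgroup A} {d : ℕ} {c : A ⧸ H'} {x : A × ℤ} :
    x ∈ mkH H' d c ↔ ∃ k : ℤ, x.2 = k * d ∧ (x.1 : A ⧸ H') = k • c := Iff.rfl

lemma comap_inl_mkH (H' : AddSubgroup A) {d : ℕ} (hd : d ≠ 0) (c : A ⧸ H') :
    comap (AddMonoidHom.inl A ℤ) (mkH H' d c) = H' := by
  ext a
  simp only [mem_comap, AddMonoidHom.inl_apply, mem_mkH]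
  constructor
  · rintro ⟨k, hk1, hk2⟩
    have hk : k = 0 := by
      rcases mul_eq_zero.1 hk1.symm with h | h
      · exact h
      · exact absurd (by exact_mod_cast h) hd
    rw [hk, zero_zsmul] at hk2
    simpa [QuotientAddGroup.eq_zero_iff] using hk2
  · intro ha
    exact ⟨0, by simp, by simp [(QuotientAddGroup.eq_zero_iff a).2 ha]⟩

lemma map_snd_mkH (H' : AddSubgroup A) (d : ℕ) (c : A ⧸ H') :
    map (AddMonoidHom.snd A ℤ) (mkH H' d c) = zmultiples (d : ℤ) := by
  ext t
  simp only [mem_map, mem_zmultiples_iff]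
  constructor
  · rintro ⟨⟨a, s⟩, ⟨k, hk1, hk2⟩, rfl⟩
    exact ⟨k, by simpa [mul_comm] using hk1.symm⟩
  · rintro ⟨k, hk⟩
    obtain ⟨a, ha⟩ := QuotientAddGroup.mk_surjective (k • c)
    exact ⟨(a, t), ⟨k, by simpa [mul_comm] using hk.symm, ha⟩, rfl⟩

lemma index_mkH (H' : AddSubgroup A) {d : ℕ} (hd : d ≠ 0) (c : A ⧸ H') :
    (mkH H' d c).index = H'.index * d := by
  set Hc := mkH H' d c with hHc
  have hle : Hc ≤ comap (AddMonoidHom.snd A ℤ) (zmultiples (d : ℤ)) := by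
    rw [← map_le_iff_le_comap, map_snd_mkH]
  set θ : (A × ℤ) ⧸ Hc →+ ℤ ⧸ zmultiples (d : ℤ) :=
    QuotientAddGroup.map Hc (zmultiples (d : ℤ)) (AddMonoidHom.snd A ℤ) hle with hθ
  set ψ : A →+ (A × ℤ) ⧸ Hc :=
    (QuotientAddGroup.mk' Hc).comp (AddMonoidHom.inl A ℤ) with hψ
  have hψker : ψ.ker = H' := by
    ext a
    simp only [hψ, AddMonoidHom.mem_ker, AddMonoidHom.comp_apply, AddMonoidHom.inl_apply,
      QuotientAddGroup.mk'_apply, QuotientAddGroup.eq_zero_iff]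
    rw [← comap_inl_mkH H' hd c]
    rfl
  have hθsurj : Function.Surjective θ := by
    intro y
    induction y using QuotientAddGroup.induction_on with
    | H t => exact ⟨QuotientAddGroup.mk (0, t), rfl⟩
  have hker : θ.ker = ψ.range := by
    ext x
    induction x using QuotientAddGroup.induction_on with
    | H z =>
      obtain ⟨a, t⟩ := z
      simp only [AddMonoidHom.mem_ker, hθ, QuotientAddGroup.map_mk,
        QuotientAddGroup.eq_zero_iff, mem_zmultiples_iff]
      constructor
      · rintro ⟨k, hk⟩
        obtain ⟨b, hb⟩ := QuotientAddGroup.mk_surjective (k • c)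
        have hbt : (b, t) ∈ Hc := ⟨k, by simpa [smul_eq_mul, mul_comm] using hk.symm, hb⟩
        refine ⟨a - b, ?_⟩
        have : ((a - b, (0 : ℤ)) : A × ℤ) = (a, t) - (b, t) := by simp
        simp only [hψ, AddMonoidHom.comp_apply, AddMonoidHom.inl_apply,
          QuotientAddGroup.mk'_apply, this]
        rw [QuotientAddGroup.mk_sub, (QuotientAddGroup.eq_zero_iff _).2 hbt, sub_zero]
      · rintro ⟨b, hb⟩
        simp only [hψ, AddMonoidHom.comp_apply, AddMonoidHom.inl_apply,
          QuotientAddGroup.mk'_apply] at hb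
        obtain ⟨k, hk1, -⟩ := QuotientAddGroup.eq.1 hb
        have ht : t = k * d := by simpa using hk1
        exact ⟨k, by simp [smul_eq_mul, ht]⟩
  have h1 : Nat.card ((A × ℤ) ⧸ Hc) = Nat.card (((A × ℤ) ⧸ Hc) ⧸ θ.ker) * Nat.card θ.ker :=
    AddSubgroup.card_eq_card_quotient_mul_card_addSubgroup θ.ker
  have h2 : Nat.card (((A × ℤ) ⧸ Hc) ⧸ θ.ker) = d := by
    rw [Nat.card_congr (QuotientAddGroup.quotientKerEquivOfSurjective θ hθsurj).toEquiv]
    have := Int.index_zmultiples (d : ℤ)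
    simpa [AddSubgroup.index] using this
  have h3 : Nat.card θ.ker = H'.index := by
    rw [hker, Nat.card_congr (QuotientAddGroup.quotientKerEquivRange ψ).toEquiv.symm, hψker]
    rfl
  show Nat.card ((A × ℤ) ⧸ Hc) = H'.index * d
  rw [h1, h2, h3, mul_comm]

lemma exists_mkH_repr (H : AddSubgroup (A × ℤ)) (hH : H.index ≠ 0) :
    ∃ (H' : AddSubgroup A) (d : ℕ) (c : A ⧸ H'), d ≠ 0 ∧ H = mkH H' d c := by
  obtain ⟨g, hg⟩ := Int.subgroup_cyclic (map (AddMonoidHom.snd A ℤ) H)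
  rw [← AddSubgroup.zmultiples_eq_closure] at hg
  set d : ℕ := g.natAbs with hdd
  have hsnd_surj : Function.Surjective (AddMonoidHom.snd A ℤ) := fun t => ⟨(0, t), rfl⟩
  have hd0 : d ≠ 0 := by
    intro h0
    have hg0 : g = 0 := by omega
    have hle : H ≤ comap (AddMonoidHom.snd A ℤ) (map (AddMonoidHom.snd A ℤ) H) :=
      fun x hx => mem_comap.2 (mem_map_of_mem _ hx)
    have : (comap (AddMonoidHom.snd A ℤ) (map (AddMonoidHom.snd A ℤ) H)).index = 0 := by
      rw [index_comap_of_surjective _ hsnd_surj, hg, hg0]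
      simpa using Int.index_zmultiples 0
    exact hH (Nat.eq_zero_of_zero_dvd (this ▸ AddSubgroup.index_dvd_of_le hle))
  have hgd : zmultiples g = zmultiples (g.natAbs : ℤ) := by
    ext x
    simp only [mem_zmultiples_iff, smul_eq_mul]
    rcases Int.natAbs_eq g with h | h
    · constructor
      · rintro ⟨k, rfl⟩; exact ⟨k, by rw [← h]⟩
      · rintro ⟨k, rfl⟩; exact ⟨k, by rw [← h]⟩
    · constructor
      · rintro ⟨k, rfl⟩
        exact ⟨-k, by rw [h]; simp only [Int.natAbs_neg, Int.natAbs_natCast]; ring⟩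
      · rintro ⟨k, rfl⟩
        exact ⟨-k, by rw [h]; simp only [Int.natAbs_neg, Int.natAbs_natCast]; ring⟩
  rw [hgd] at hg
  have hdmem : (d : ℤ) ∈ map (AddMonoidHom.snd A ℤ) H := by
    rw [hg]; exact mem_zmultiples _
  obtain ⟨⟨a₀, t₀⟩, ha₀, ht₀⟩ := mem_map.1 hdmem
  have ht₀' : t₀ = (d : ℤ) := ht₀
  subst ht₀'
  set H' : AddSubgroup A := comap (AddMonoidHom.inl A ℤ) H with hH'
  refine ⟨H', d, QuotientAddGroup.mk a₀, hd0, ?_⟩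
  ext ⟨a, t⟩
  constructor
  · intro hat
    have ht : t ∈ zmultiples (d : ℤ) := by
      rw [← hg]; exact mem_map_of_mem _ hat
    obtain ⟨k, hk⟩ := mem_zmultiples_iff.1 ht
    have hsub : ((a - k • a₀, (0 : ℤ)) : A × ℤ) ∈ H := by
      have h2 : (k • (a₀, (d : ℤ)) : A × ℤ) ∈ H := zsmul_mem ha₀ k
      have : ((a - k • a₀, (0 : ℤ)) : A × ℤ) = (a, t) - k • (a₀, (d : ℤ)) := by
        simp [Prod.ext_iff, ← hk]
      rw [this]
      exact sub_mem hat h2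
    refine ⟨k, by simp [smul_eq_mul] at hk ⊢; omega, ?_⟩
    have : a - k • a₀ ∈ H' := hsub
    rw [← QuotientAddGroup.mk_zsmul]
    exact (QuotientAddGroup.eq_iff_sub_mem).2 this
  · rintro ⟨k, hk1, hk2⟩
    simp only at hk1 hk2
    rw [← QuotientAddGroup.mk_zsmul] at hk2
    have hsub : a - k • a₀ ∈ H' := (QuotientAddGroup.eq_iff_sub_mem).1 hk2
    have h1 : ((a - k • a₀, (0 : ℤ)) : A × ℤ) ∈ H := hsub
    have h2 : (k • (a₀, (d : ℤ)) : A × ℤ) ∈ H := zsmul_mem ha₀ k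
    have : ((a, t) : A × ℤ) = (a - k • a₀, (0 : ℤ)) + k • (a₀, (d : ℤ)) := by
      simp [Prod.ext_iff, hk1]
    rw [this]
    exact add_mem h1 h2


lemma card_step (m : ℕ) (hm : m ≠ 0)
    (hfin : ∀ e : ℕ, e ≠ 0 → Finite {H' : AddSubgroup A // H'.index = e}) :
    Nat.card {H : AddSubgroup (A × ℤ) // H.index = m}
      = ∑ e ∈ m.divisors, e * Nat.card {H' : AddSubgroup A // H'.index = e} := by
  classical
  let T := Σ e : {e // e ∈ m.divisors}, Σ H' : {H' : AddSubgroup A // H'.index = e.1}, A ⧸ H'.1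
  have hediv : ∀ e : {e // e ∈ m.divisors}, e.1 ∣ m ∧ e.1 ≠ 0 := by
    rintro ⟨e, he⟩
    rw [Nat.mem_divisors] at he
    refine ⟨he.1, ?_⟩
    rintro rfl
    exact he.2 (zero_dvd_iff.1 he.1)
  have hdne : ∀ e : {e // e ∈ m.divisors}, m / e.1 ≠ 0 := by
    intro e
    obtain ⟨h1, h2⟩ := hediv e
    exact Nat.div_ne_zero_iff.2 ⟨h2, Nat.le_of_dvd (Nat.pos_of_ne_zero hm) h1⟩
  let Φ : T → {H : AddSubgroup (A × ℤ) // H.index = m} := fun x =>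
    ⟨mkH x.2.1.1 (m / x.1.1) x.2.2, by
      rw [index_mkH _ (hdne x.1), x.2.1.2, Nat.mul_div_cancel' (hediv x.1).1]⟩
  have hbij : Function.Bijective Φ := by
    constructor
    · rintro ⟨⟨e1, he1⟩, ⟨H1, hH1⟩, c1⟩ ⟨⟨e2, he2⟩, ⟨H2, hH2⟩, c2⟩ h
      have hmk : mkH H1 (m / e1) c1 = mkH H2 (m / e2) c2 := congrArg Subtype.val h
      have hd1 : m / e1 ≠ 0 := hdne ⟨e1, he1⟩
      have hd2 : m / e2 ≠ 0 := hdne ⟨e2, he2⟩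
      have hHeq : H1 = H2 := by
        rw [← comap_inl_mkH H1 hd1 c1, ← comap_inl_mkH H2 hd2 c2, hmk]
      subst hHeq
      have hee : e1 = e2 := hH1.symm.trans hH2
      subst hee
      have hc : c1 = c2 := by
        obtain ⟨a, ha⟩ := QuotientAddGroup.mk_surjective c1
        have hmem : ((a, ((m / e1 : ℕ) : ℤ)) : A × ℤ) ∈ mkH H1 (m / e1) c1 :=
          ⟨1, by simp, by simp [ha]⟩
        rw [hmk] at hmem
        obtain ⟨k, hk1, hk2⟩ := hmem
        have hk : k = 1 := by
          have hne : ((m / e1 : ℕ) : ℤ) ≠ 0 := Int.natCast_ne_zero.2 hd1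
          have h1 : k * ((m / e1 : ℕ) : ℤ) = 1 * ((m / e1 : ℕ) : ℤ) := by
            rw [one_mul, ← hk1]
          exact mul_right_cancel₀ hne h1
        rw [← ha, hk2, hk, one_zsmul]
      subst hc
      rfl
    · rintro ⟨H, hH⟩
      have hne : H.index ≠ 0 := by rw [hH]; exact hm
      obtain ⟨H', d, c, hd0, rfl⟩ := exists_mkH_repr H hne
      have hidx : H'.index * d = m := by rw [← hH, index_mkH _ hd0]
      have he0 : H'.index ≠ 0 := fun h0 => hm (by rw [← hidx, h0, zero_mul])
      have hemem : H'.index ∈ m.divisors :=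
        Nat.mem_divisors.2 ⟨Dvd.intro d hidx, hm⟩
      have hdm : m / H'.index = d :=
        Nat.div_eq_of_eq_mul_left (Nat.pos_of_ne_zero he0) (by rw [← hidx, mul_comm])
      refine ⟨⟨⟨H'.index, hemem⟩, ⟨H', rfl⟩, c⟩, ?_⟩
      apply Subtype.ext
      show mkH H' (m / H'.index) c = mkH H' d c
      rw [hdm]
  haveI hq : ∀ (e : {e // e ∈ m.divisors}) (H' : {H' : AddSubgroup A // H'.index = e.1}),
      Finite (A ⧸ H'.1) := by
    intro e H'
    apply Nat.finite_of_card_ne_zero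
    have h : Nat.card (A ⧸ H'.1) = H'.1.index := rfl
    rw [h, H'.2]
    exact (hediv e).2
  rw [← Nat.card_congr (Equiv.ofBijective Φ hbij)]
  haveI I2 : ∀ (e : {e // e ∈ m.divisors}), Fintype {H' : AddSubgroup A // H'.index = e.1} :=
    fun e => @Fintype.ofFinite _ (hfin e.1 (hediv e).2)
  haveI I3 : ∀ (e : {e // e ∈ m.divisors}) (H' : {H' : AddSubgroup A // H'.index = e.1}),
      Fintype (A ⧸ H'.1) := fun e H' => Fintype.ofFinite _
  have hcard : ∀ (e : {e // e ∈ m.divisors}) (H' : {H' : AddSubgroup A // H'.index = e.1}),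
      Fintype.card (A ⧸ H'.1) = e.1 := by
    intro e H'
    have h1 : Nat.card (A ⧸ H'.1) = H'.1.index := rfl
    rw [← Nat.card_eq_fintype_card, h1, H'.2]
  rw [Nat.card_eq_fintype_card (α := T)]
  rw [Fintype.card_sigma]
  have : ∀ e : {e // e ∈ m.divisors},
      Fintype.card (Σ H' : {H' : AddSubgroup A // H'.index = e.1}, A ⧸ H'.1)
        = e.1 * Nat.card {H' : AddSubgroup A // H'.index = e.1} := by
    intro e
    rw [Fintype.card_sigma]
    simp only [hcard e]
    rw [Finset.sum_const, Nat.card_eq_fintype_card, Finset.card_univ, smul_eq_mul, mul_comm]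
  simp only [this]
  exact Finset.sum_coe_sort m.divisors
    (fun e => e * Nat.card {H' : AddSubgroup A // H'.index = e})

lemma finite_subgroups (n m : ℕ) (hm : m ≠ 0) :
    Finite {H : AddSubgroup (Fin n → ℤ) // H.index = m} := by
  classical
  set G := Fin n → ℤ
  let π : G →+ (Fin n → ZMod m) :=
    AddMonoidHom.mk' (fun x i => ((x i : ℤ) : ZMod m)) (by
      intro x y
      funext i
      show ((x i + y i : ℤ) : ZMod m) = ((x i : ℤ) : ZMod m) + ((y i : ℤ) : ZMod m)
      push_cast
      ring)
  have hker : ∀ (H : AddSubgroup G), H.index = m → π.ker ≤ H := by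
    intro H hH x hx
    have hx' : ∀ i, (m : ℤ) ∣ x i := by
      intro i
      have : ((x i : ℤ) : ZMod m) = 0 := congrFun hx i
      exact (ZMod.intCast_zmod_eq_zero_iff_dvd _ _).1 this
    have hy : x = m • fun i => x i / (m : ℤ) := by
      funext i
      simp only [Pi.smul_apply, nsmul_eq_mul]
      exact (Int.mul_ediv_cancel' (hx' i)).symm
    rw [hy, ← hH]
    exact AddSubgroup.nsmul_index_mem H _
  have hinj : Function.Injective
      (fun H : {H : AddSubgroup G // H.index = m} => AddSubgroup.map π H.1) := by
    rintro ⟨H1, h1⟩ ⟨H2, h2⟩ h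
    simp only at h
    have e1 : AddSubgroup.comap π (AddSubgroup.map π H1) = H1 := by
      rw [AddSubgroup.comap_map_eq, sup_eq_left.2 (hker H1 h1)]
    have e2 : AddSubgroup.comap π (AddSubgroup.map π H2) = H2 := by
      rw [AddSubgroup.comap_map_eq, sup_eq_left.2 (hker H2 h2)]
    have hH12 : H1 = H2 := by rw [← e1, ← e2, h]
    exact Subtype.ext hH12
  haveI : Finite (Fin n → ZMod m) := by
    haveI : NeZero m := ⟨hm⟩
    infer_instance
  haveI : Finite (AddSubgroup (Fin n → ZMod m)) := by
    have : Function.Injective (fun H : AddSubgroup (Fin n → ZMod m) => (H : Set (Fin n → ZMod m))) :=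
      fun H1 H2 h => SetLike.coe_injective h
    exact Finite.of_injective _ this
  exact Finite.of_injective _ hinj

lemma card_index_congr {G G' : Type} [AddGroup G] [AddGroup G'] (e : G ≃+ G') (m : ℕ) :
    Nat.card {H : AddSubgroup G // H.index = m}
      = Nat.card {H : AddSubgroup G' // H.index = m} := by
  have key : ∀ (K : Type) (K' : Type) [AddGroup K] [AddGroup K'] (f : K ≃+ K')
      (H : AddSubgroup K'), AddSubgroup.comap f.symm.toAddMonoidHom
        (AddSubgroup.comap f.toAddMonoidHom H) = H := by
    intro K K' _ _ f H
    rw [AddSubgroup.comap_comap]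
    ext x
    simp [AddSubgroup.mem_comap]
  apply Nat.card_congr
  refine ⟨fun H => ⟨AddSubgroup.comap e.symm.toAddMonoidHom H.1, ?_⟩,
    fun H => ⟨AddSubgroup.comap e.toAddMonoidHom H.1, ?_⟩, ?_, ?_⟩
  · rw [AddSubgroup.index_comap_of_surjective _ e.symm.surjective, H.2]
  · rw [AddSubgroup.index_comap_of_surjective _ e.surjective, H.2]
  · rintro ⟨H, hH⟩
    exact Subtype.ext (key _ _ e.symm H)
  · rintro ⟨H, hH⟩
    exact Subtype.ext (key _ _ e H)

lemma subCount0 (m : ℕ) :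
    Nat.card {H : AddSubgroup (Fin 0 → ℤ) // H.index = m} = if m = 1 then 1 else 0 := by
  haveI : Subsingleton (Fin 0 → ℤ) := ⟨fun a b => funext fun i => i.elim0⟩
  have htop : ∀ H : AddSubgroup (Fin 0 → ℤ), H = ⊤ := by
    intro H
    ext x
    simp only [AddSubgroup.mem_top, iff_true]
    have : x = 0 := Subsingleton.elim _ _
    rw [this]; exact H.zero_mem
  have hall : ∀ H : AddSubgroup (Fin 0 → ℤ), H.index = 1 := by
    intro H
    rw [htop H]
    exact AddSubgroup.index_top
  by_cases hm : m = 1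
  · subst hm
    rw [if_pos rfl, Nat.card_eq_one_iff_unique]
    constructor
    · exact ⟨fun H1 H2 => Subtype.ext ((htop H1.1).trans (htop H2.1).symm)⟩
    · exact ⟨⟨⊤, hall ⊤⟩⟩
  · rw [if_neg hm]
    rw [Nat.card_eq_zero]
    left
    exact ⟨fun H => hm ((hall H.1).symm.trans H.2).symm⟩

def piSuccAddEquiv (n : ℕ) : (Fin (n + 1) → ℤ) ≃+ (Fin n → ℤ) × ℤ where
  toFun f := (fun i => f i.succ, f 0)
  invFun x := Fin.cons x.2 x.1
  left_inv f := by
    funext i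
    cases i using Fin.cases <;> simp
  right_inv x := by
    ext i <;> simp
  map_add' f g := rfl

lemma subCount_succ (n m : ℕ) (hm : m ≠ 0) :
    Nat.card {H : AddSubgroup (Fin (n + 1) → ℤ) // H.index = m}
      = ∑ e ∈ m.divisors, e * Nat.card {H : AddSubgroup (Fin n → ℤ) // H.index = e} := by
  rw [card_index_congr (piSuccAddEquiv n) m]
  exact card_step m hm (fun e he => finite_subgroups n e he)


open Finset

noncomputable def Pfac (q : ℚ) (n a : ℕ) : ℚ :=
  ∏ j ∈ Icc 1 a, (q ^ (j + n - 1) - 1) / (q ^ j - 1)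

noncomputable def Nprod (q : ℚ) (n a : ℕ) : ℚ := ∏ j ∈ Icc 1 a, (q ^ (j + n - 1) - 1)
noncomputable def Dprod (q : ℚ) (a : ℕ) : ℚ := ∏ j ∈ Icc 1 a, (q ^ j - 1)

lemma Pfac_zero (q : ℚ) (n : ℕ) : Pfac q n 0 = 1 := by simp [Pfac]

lemma Pfac_eq (q : ℚ) (n a : ℕ) : Pfac q n a = Nprod q n a / Dprod q a := by
  unfold Pfac Nprod Dprod; exact Finset.prod_div_distrib _ _

lemma pow_sub_one_ne_zero {q : ℚ} (hq : 2 ≤ q) {j : ℕ} (hj : j ≠ 0) : q ^ j - 1 ≠ 0 := by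
  have h1 : (1 : ℚ) < q := lt_of_lt_of_le one_lt_two hq
  have := one_lt_pow₀ h1 hj
  linarith

lemma Dprod_ne_zero {q : ℚ} (hq : 2 ≤ q) (a : ℕ) : Dprod q a ≠ 0 := by
  unfold Dprod
  rw [Finset.prod_ne_zero_iff]
  intro j hj
  exact pow_sub_one_ne_zero hq (by simp at hj; omega)

lemma Dprod_succ (q : ℚ) (a : ℕ) : Dprod q (a + 1) = Dprod q a * (q ^ (a + 1) - 1) := by
  unfold Dprod
  rw [Finset.prod_Icc_succ_top (by omega)]

lemma Nprod_shift (q : ℚ) (n a : ℕ) :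
    Nprod q n (a + 1) = (q ^ n - 1) * Nprod q (n + 1) a := by
  induction a with
  | zero => simp [Nprod]
  | succ a ih =>
    unfold Nprod at *
    rw [Finset.prod_Icc_succ_top (by omega), ih,
      Finset.prod_Icc_succ_top (a := 1) (b := a) (by omega)]
    have e1 : a + 1 + 1 + n - 1 = a + 1 + (n + 1) - 1 := by omega
    rw [e1]
    ring

lemma Nprod_succ_top (q : ℚ) (n a : ℕ) :
    Nprod q (n + 1) (a + 1) = Nprod q (n + 1) a * (q ^ (a + n + 1) - 1) := by
  unfold Nprod
  rw [Finset.prod_Icc_succ_top (by omega)]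
  have e1 : a + 1 + (n + 1) - 1 = a + n + 1 := by omega
  rw [e1]

lemma Pfac_pascal {q : ℚ} (hq : 2 ≤ q) (n a : ℕ) :
    Pfac q (n + 1) (a + 1) = Pfac q (n + 1) a + q ^ (a + 1) * Pfac q n (a + 1) := by
  have hD : Dprod q a ≠ 0 := Dprod_ne_zero hq a
  have hx : q ^ (a + 1) - 1 ≠ 0 := pow_sub_one_ne_zero hq (by omega)
  rw [Pfac_eq, Pfac_eq, Pfac_eq, Nprod_succ_top, Nprod_shift, Dprod_succ]
  field_simp
  ring

lemma sum_Pfac {q : ℚ} (hq : 2 ≤ q) (n a : ℕ) :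
    ∑ i ∈ range (a + 1), q ^ i * Pfac q n i = Pfac q (n + 1) a := by
  induction a with
  | zero => simp [Pfac_zero]
  | succ a ih =>
    rw [Finset.sum_range_succ, ih, ← Pfac_pascal hq]

noncomputable def gfun (n m : ℕ) : ℚ :=
  ∏ p ∈ m.primeFactors, Pfac (p : ℚ) n (m.factorization p)

lemma gfun_one (n : ℕ) : gfun n 1 = 1 := by simp [gfun]

lemma gfun_prime_pow (n : ℕ) {p : ℕ} (hp : p.Prime) (a : ℕ) :
    gfun n (p ^ a) = Pfac (p : ℚ) n a := by
  rcases Nat.eq_zero_or_pos a with rfl | ha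
  · rw [pow_zero, gfun_one, Pfac_zero]
  · unfold gfun
    rw [Nat.primeFactors_prime_pow (by omega) hp, Finset.prod_singleton,
      hp.factorization_pow, Finsupp.single_eq_same]

lemma gfun_zero_eq (m : ℕ) (hm : m ≠ 0) : gfun 0 m = if m = 1 then 1 else 0 := by
  by_cases h1 : m = 1
  · simp [h1, gfun_one]
  · rw [if_neg h1]
    obtain ⟨q, hq⟩ := Nat.exists_prime_and_dvd (fun h => h1 h)
    have hqm : q ∈ m.primeFactors := Nat.mem_primeFactors.2 ⟨hq.1, hq.2, hm⟩
    apply Finset.prod_eq_zero hqm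
    have hv : 1 ≤ m.factorization q := hq.1.factorization_pos_of_dvd hm hq.2
    apply Finset.prod_eq_zero (Finset.mem_Icc.2 ⟨le_refl 1, hv⟩)
    norm_num

lemma gfun_mul_coprime (n : ℕ) {a b : ℕ} (ha : a ≠ 0) (hb : b ≠ 0) (hab : a.Coprime b) :
    gfun n (a * b) = gfun n a * gfun n b := by
  unfold gfun
  rw [Nat.primeFactors_mul ha hb,
    Finset.prod_union hab.disjoint_primeFactors]
  congr 1
  · apply Finset.prod_congr rfl
    intro q hq
    congr 1
    rw [Nat.factorization_mul ha hb]
    have hb0 : b.factorization q = 0 := by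
      rw [← Finsupp.notMem_support_iff, Nat.support_factorization]
      exact fun hc => (Finset.disjoint_left.1 hab.disjoint_primeFactors) hq hc
    simp [hb0]
  · apply Finset.prod_congr rfl
    intro q hq
    congr 1
    rw [Nat.factorization_mul ha hb]
    have ha0 : a.factorization q = 0 := by
      rw [← Finsupp.notMem_support_iff, Nat.support_factorization]
      exact fun hc => (Finset.disjoint_left.1 hab.disjoint_primeFactors) hc hq
    simp [ha0]

open ArithmeticFunction in
noncomputable def Gf (n : ℕ) : ArithmeticFunction ℚ :=
  ⟨fun m => if m = 0 then 0 else gfun n m, by simp⟩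

lemma Gf_apply {n m : ℕ} (hm : m ≠ 0) : Gf n m = gfun n m := if_neg hm

lemma Gf_mult (n : ℕ) : (Gf n).IsMultiplicative := by
  constructor
  · rw [Gf_apply one_ne_zero, gfun_one]
  · intro a b hab
    rcases eq_or_ne a 0 with rfl | ha
    · have hb : b = 1 := by simpa using hab
      subst hb
      simp [Gf]
    rcases eq_or_ne b 0 with rfl | hb
    · have ha1 : a = 1 := by simpa using hab
      subst ha1
      simp [Gf]
    rw [Gf_apply (mul_ne_zero ha hb), Gf_apply ha, Gf_apply hb,
      gfun_mul_coprime n ha hb hab]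

open ArithmeticFunction in
lemma gfun_recursion (n : ℕ) {m : ℕ} (hm : m ≠ 0) :
    gfun (n + 1) m = ∑ e ∈ m.divisors, (e : ℚ) * gfun n e := by
  set R : ArithmeticFunction ℚ :=
    (((ArithmeticFunction.id : ArithmeticFunction ℕ) : ArithmeticFunction ℚ).pmul (Gf n)) *
      ((ArithmeticFunction.zeta : ArithmeticFunction ℕ) : ArithmeticFunction ℚ) with hR
  have hRmult : R.IsMultiplicative :=
    ((isMultiplicative_id.natCast).pmul (Gf_mult n)).mul (isMultiplicative_zeta.natCast)
  have hRapp : ∀ x : ℕ, R x = ∑ e ∈ x.divisors, (e : ℚ) * Gf n e := by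
    intro x
    rw [hR, ArithmeticFunction.coe_mul_zeta_apply]
    apply Finset.sum_congr rfl
    intro e _
    rw [ArithmeticFunction.pmul_apply, ArithmeticFunction.natCoe_apply, ArithmeticFunction.id_apply]
  have hpp : ∀ (p k : ℕ), p.Prime → Gf (n + 1) (p ^ k) = R (p ^ k) := by
    intro p k hp
    have hq : (2 : ℚ) ≤ (p : ℚ) := by exact_mod_cast hp.two_le
    rw [Gf_apply (pow_ne_zero _ hp.pos.ne'), gfun_prime_pow _ hp, hRapp,
      Nat.sum_divisors_prime_pow hp]
    rw [← sum_Pfac hq n k]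
    apply Finset.sum_congr rfl
    intro i _
    rw [Gf_apply (pow_ne_zero _ hp.pos.ne'), gfun_prime_pow _ hp]
    push_cast
    ring
  have key : Gf (n + 1) m = R m := by
    rw [(Gf_mult (n + 1)).multiplicative_factorization _ hm,
      hRmult.multiplicative_factorization _ hm]
    apply Finsupp.prod_congr
    intro p hp
    exact hpp p _ (Nat.prime_of_mem_primeFactors (by rwa [← Nat.support_factorization]))
  rw [← Gf_apply hm, key, hRapp]
  apply Finset.sum_congr rfl
  intro e he
  rw [Gf_apply (Nat.pos_of_mem_divisors he).ne']


lemma main_aux (n m : ℕ) (hm : m ≠ 0) :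
    (Nat.card {H : AddSubgroup (Fin n → ℤ) // H.index = m} : ℚ) = gfun n m := by
  induction n generalizing m with
  | zero =>
    rw [subCount0, gfun_zero_eq m hm]
    split <;> simp
  | succ n ih =>
    rw [subCount_succ n m hm, gfun_recursion n hm]
    push_cast
    apply Finset.sum_congr rfl
    intro e he
    rw [ih e (Nat.pos_of_mem_divisors he).ne']

/-- `subCount n m` is the number of sublattices (subgroups) of `ℤⁿ` of index `m`. -/
noncomputable def subCount (n m : ℕ) : ℕ :=
  Nat.card {H : AddSubgroup (Fin n → ℤ) // H.index = m}

/-- Gruber's formula: if `m = ∏ pᵢ^{αᵢ}`, then the number of sublattices of `ℤⁿ`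
of index `m` equals `∏ᵢ ∏_{j=1}^{αᵢ} (pᵢ^{j+n-1} − 1)/(pᵢ^j − 1)`. -/
theorem subCount_eq_prod (n m : ℕ) (hm : 1 ≤ m) (ℓ : ℕ)
    (p α : Fin ℓ → ℕ) (hp : ∀ i, (p i).Prime) (hinj : Function.Injective p)
    (hα : ∀ i, 1 ≤ α i) (hfact : m = ∏ i, p i ^ α i) :
    (subCount n m : ℚ) =
      ∏ i : Fin ℓ, ∏ j ∈ Finset.Icc 1 (α i),
        ((p i : ℚ) ^ (j + n - 1) - 1) / ((p i : ℚ) ^ j - 1) := by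
  have hm0 : m ≠ 0 := by omega
  have h1 : (subCount n m : ℚ)
      = (Nat.card {H : AddSubgroup (Fin n → ℤ) // H.index = m} : ℚ) := rfl
  rw [h1, main_aux n m hm0]
  have hpf : m.primeFactors = Finset.univ.image p := by
    ext q
    simp only [Nat.mem_primeFactors, Finset.mem_image, Finset.mem_univ, true_and]
    constructor
    · rintro ⟨hq, hdvd, -⟩
      rw [hfact] at hdvd
      obtain ⟨i, -, hi⟩ := (Prime.dvd_finset_prod_iff hq.prime _).1 hdvd
      exact ⟨i, ((Nat.prime_dvd_prime_iff_eq hq (hp i)).1 (hq.dvd_of_dvd_pow hi)).symm⟩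
    · rintro ⟨i, rfl⟩
      refine ⟨hp i, ?_, hm0⟩
      rw [hfact]
      exact dvd_trans (dvd_pow_self (p i) (by have := hα i; omega))
        (Finset.dvd_prod_of_mem _ (Finset.mem_univ i))
  have hfac : ∀ i, m.factorization (p i) = α i := by
    intro i
    rw [hfact, Nat.factorization_prod (fun j _ => pow_ne_zero _ (hp j).pos.ne')]
    rw [Finset.sum_apply']
    rw [Finset.sum_eq_single i]
    · rw [(hp i).factorization_pow, Finsupp.single_eq_same]
    · intro j _ hji
      rw [(hp j).factorization_pow, Finsupp.single_apply, if_neg (fun h => hji (hinj h))]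
    · intro h
      exact absurd (Finset.mem_univ i) h
  rw [gfun, hpf, Finset.prod_image (fun i _ j _ h => hinj h)]
  apply Finset.prod_congr rfl
  intro i _
  rw [hfac i]
  rfl
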